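/- Let U ⊆ ℝ² be open with coordinates (v,w), let a, b : U → ℝ be twice continuously differentiable and q, r, m, n : U → ℝ continuously differentiable (with q_v/q continuously differentiable in w, and similarly for r), such that a_v, a_w, b_v, b_w, q, r are nowhere zero and a − b is nowhere zero. Let λ, μ be nonzero real constants with λ ≠ μ. Suppose that both the pair (q,r) and the rescaled pair (λq, μr) satisfy, with the same a, b, m, n, the equations (qr2): (q_v/q)_w = a_{vw}/(a−b) − (a_v(a_w+b_w) + a_w b_v)/(a−b)² + (a_w b_v/(a_v b_w)) m n + 2 a_w² r n/(a_v (a−b) q) and (r_v/r)_w = b_{vw}/(b−a) − (b_w(a_v+b_v) + a_w b_v)/(a−b)² + (a_w b_v/(a_v b_w)) m n + 2 b_v² q m/(b_w (b−a) r). Then m = 0 and n = 0 identically on U. -/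

import Mathlib

/-- Partial derivative of `f : ℝⁿ → ℝ` in the `i`-th coordinate direction. -/
noncomputable def pd {n : ℕ} (i : Fin n) (f : (Fin n → ℝ) → ℝ) (x : Fin n → ℝ) : ℝ :=
  fderiv ℝ f x (Pi.single i 1)

/-- Coordinates on ℝ² are `(v,w)` with indices `(0,1)` (so subscript `v` = `pd 0`,
subscript `w` = `pd 1`).  `QR2 a b q r m n U` says that the equations (qr2):
`(q_v/q)_w = a_{vw}/(a−b) − (a_v(a_w+b_w) + a_w b_v)/(a−b)² + (a_w b_v/(a_v b_w)) m n
+ 2 a_w² r n/(a_v (a−b) q)` and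
`(r_v/r)_w = b_{vw}/(b−a) − (b_w(a_v+b_v) + a_w b_v)/(a−b)² + (a_w b_v/(a_v b_w)) m n
+ 2 b_v² q m/(b_w (b−a) r)` hold on `U`. -/
def QR2 (a b q r m n : (Fin 2 → ℝ) → ℝ) (U : Set (Fin 2 → ℝ)) : Prop :=
  ∀ x ∈ U,
    (pd 1 (fun y => pd 0 q y / q y) x =
      pd 1 (pd 0 a) x / (a x - b x)
      - (pd 0 a x * (pd 1 a x + pd 1 b x) + pd 1 a x * pd 0 b x) / (a x - b x) ^ 2
      + (pd 1 a x * pd 0 b x / (pd 0 a x * pd 1 b x)) * m x * n x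
      + 2 * (pd 1 a x) ^ 2 * r x * n x / (pd 0 a x * (a x - b x) * q x)) ∧
    (pd 1 (fun y => pd 0 r y / r y) x =
      pd 1 (pd 0 b) x / (b x - a x)
      - (pd 1 b x * (pd 0 a x + pd 0 b x) + pd 1 a x * pd 0 b x) / (a x - b x) ^ 2
      + (pd 1 a x * pd 0 b x / (pd 0 a x * pd 1 b x)) * m x * n x
      + 2 * (pd 0 b x) ^ 2 * q x * m x / (pd 1 b x * (b x - a x) * r x))

/-- If both `(q,r)` and the rescaled pair `(λq, μr)` (with `λ, μ` nonzero constants,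
`λ ≠ μ`) satisfy the equations (qr2) with the same `a, b, m, n`, then `m = n = 0` on `U`. -/
theorem stmt18 (U : Set (Fin 2 → ℝ)) (hU : IsOpen U)
    (a b q r m n : (Fin 2 → ℝ) → ℝ)
    (ha : ContDiffOn ℝ 2 a U) (hb : ContDiffOn ℝ 2 b U)
    (hq : ContDiffOn ℝ 1 q U) (hr : ContDiffOn ℝ 1 r U)
    (hm : ContDiffOn ℝ 1 m U) (hn : ContDiffOn ℝ 1 n U)
    (hqv : ContDiffOn ℝ 1 (fun x => pd 0 q x / q x) U)
    (hrv : ContDiffOn ℝ 1 (fun x => pd 0 r x / r x) U)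
    (hav : ∀ x ∈ U, pd 0 a x ≠ 0) (haw : ∀ x ∈ U, pd 1 a x ≠ 0)
    (hbv : ∀ x ∈ U, pd 0 b x ≠ 0) (hbw : ∀ x ∈ U, pd 1 b x ≠ 0)
    (hq0 : ∀ x ∈ U, q x ≠ 0) (hr0 : ∀ x ∈ U, r x ≠ 0)
    (hab : ∀ x ∈ U, a x - b x ≠ 0)
    (lam mu : ℝ) (hlam : lam ≠ 0) (hmu : mu ≠ 0) (hlm : lam ≠ mu)
    (hQR : QR2 a b q r m n U)
    (hQR' : QR2 a b (fun y => lam * q y) (fun y => mu * r y) m n U) :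
    ∀ x ∈ U, m x = 0 ∧ n x = 0 := by

  intro x hx
  have hUx : U ∈ nhds x := hU.mem_nhds hx
  have hpdq : ∀ y ∈ U, pd 0 (fun z => lam * q z) y = lam * pd 0 q y := by
    intro y hy
    have hd : DifferentiableAt ℝ q y :=
      (hq.contDiffAt (hU.mem_nhds hy)).differentiableAt one_ne_zero
    simp [pd, fderiv_const_mul hd lam]
  have hpdr : ∀ y ∈ U, pd 0 (fun z => mu * r z) y = mu * pd 0 r y := by
    intro y hy
    have hd : DifferentiableAt ℝ r y :=
      (hr.contDiffAt (hU.mem_nhds hy)).differentiableAt one_ne_zero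
    simp [pd, fderiv_const_mul hd mu]
  have hL1 : pd 1 (fun y => pd 0 (fun z => lam * q z) y / (lam * q y)) x
      = pd 1 (fun y => pd 0 q y / q y) x := by
    have hev : (fun y => pd 0 (fun z => lam * q z) y / (lam * q y))
        =ᶠ[nhds x] (fun y => pd 0 q y / q y) := by
      filter_upwards [hUx] with y hy
      rw [hpdq y hy, mul_div_mul_left _ _ hlam]
    have h := Filter.EventuallyEq.fderiv_eq (𝕜 := ℝ) hev
    simp only [pd] at h ⊢
    rw [h]
  have hL2 : pd 1 (fun y => pd 0 (fun z => mu * r z) y / (mu * r y)) x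
      = pd 1 (fun y => pd 0 r y / r y) x := by
    have hev : (fun y => pd 0 (fun z => mu * r z) y / (mu * r y))
        =ᶠ[nhds x] (fun y => pd 0 r y / r y) := by
      filter_upwards [hUx] with y hy
      rw [hpdr y hy, mul_div_mul_left _ _ hmu]
    have h := Filter.EventuallyEq.fderiv_eq (𝕜 := ℝ) hev
    simp only [pd] at h ⊢
    rw [h]
  have h1 := (hQR x hx).1
  have h2 := (hQR x hx).2
  have h1' := (hQR' x hx).1
  have h2' := (hQR' x hx).2
  rw [hL1] at h1'
  rw [hL2] at h2'
  have key1 : 2 * (pd 1 a x) ^ 2 * (mu * r x) * n x / (pd 0 a x * (a x - b x) * (lam * q x))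
      = 2 * (pd 1 a x) ^ 2 * r x * n x / (pd 0 a x * (a x - b x) * q x) := by
    linarith [h1, h1']
  have key2 : 2 * (pd 0 b x) ^ 2 * (lam * q x) * m x / (pd 1 b x * (b x - a x) * (mu * r x))
      = 2 * (pd 0 b x) ^ 2 * q x * m x / (pd 1 b x * (b x - a x) * r x) := by
    linarith [h2, h2']
  have haw' := haw x hx
  have hav' := hav x hx
  have hbv' := hbv x hx
  have hbw' := hbw x hx
  have hq0' := hq0 x hx
  have hr0' := hr0 x hx
  have hab' := hab x hx
  have hba' : b x - a x ≠ 0 := fun h => hab' (by linarith [sub_eq_zero.mp h])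
  have hn0 : n x = 0 := by
    field_simp at key1
    have h : (mu - lam) * (2 * pd 1 a x ^ 2 * r x * (pd 0 a x * (a x - b x) * q x)) * n x = 0 := by
      linear_combination (2 * pd 1 a x ^ 2 * r x * (pd 0 a x * (a x - b x) * q x)) * key1
    have hne : (mu - lam) * (2 * pd 1 a x ^ 2 * r x * (pd 0 a x * (a x - b x) * q x)) ≠ 0 :=
      mul_ne_zero (sub_ne_zero.mpr (Ne.symm hlm))
        (mul_ne_zero (mul_ne_zero (mul_ne_zero two_ne_zero (pow_ne_zero 2 haw')) hr0')
          (mul_ne_zero (mul_ne_zero hav' hab') hq0'))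
    exact (mul_eq_zero.mp h).resolve_left hne
  have hm0 : m x = 0 := by
    field_simp at key2
    have h : (lam - mu) * (2 * pd 0 b x ^ 2 * q x * (pd 1 b x * (b x - a x) * r x)) * m x = 0 := by
      linear_combination (2 * pd 0 b x ^ 2 * q x * (pd 1 b x * (b x - a x) * r x)) * key2
    have hne : (lam - mu) * (2 * pd 0 b x ^ 2 * q x * (pd 1 b x * (b x - a x) * r x)) ≠ 0 :=
      mul_ne_zero (sub_ne_zero.mpr hlm)
        (mul_ne_zero (mul_ne_zero (mul_ne_zero two_ne_zero (pow_ne_zero 2 hbv')) hq0')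
          (mul_ne_zero (mul_ne_zero hbw' hba') hr0'))
    exact (mul_eq_zero.mp h).resolve_left hne
  exact ⟨hm0, hn0⟩
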